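/- arXiv:1408.5620 — 2 statements merged into one kernel-verified Lean document; each statement's English description precedes it below -/
import Mathlib

section
/- Let A and B be coisotropic subspaces of (V,ω) and set W = A^ω + B^ω. Then W^ω = A ∩ B and W ∩ W^ω = (A^ω + B^ω) ∩ (A ∩ B) = (A^ω ∩ B) + (B^ω ∩ A). -/
open Module

variable {V : Type*} [AddCommGroup V] [Module ℝ V]

/-- The symplectic orthogonal of a subspace `W`:
`{v ∈ V | ω v w = 0 for all w ∈ W}`. -/
def sorth (ω : LinearMap.BilinForm ℝ V) (W : Submodule ℝ V) : Submodule ℝ V where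
  carrier := {v | ∀ w ∈ W, ω v w = 0}
  add_mem' := by
    intro a b ha hb w hw
    simp only [Set.mem_setOf_eq] at *
    simp [ha w hw, hb w hw]
  zero_mem' := by intro w hw; simp
  smul_mem' := by
    intro c a ha w hw
    simp only [Set.mem_setOf_eq] at *
    simp [ha w hw]

/-- Two subspaces are `ω`-orthogonal. -/
def OrthSub (ω : LinearMap.BilinForm ℝ V) (E F : Submodule ℝ V) : Prop :=
  ∀ e ∈ E, ∀ f ∈ F, ω e f = 0

lemma sorth_eq_orthogonal (ω : LinearMap.BilinForm ℝ V) (hωalt : ω.IsAlt)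
    (W : Submodule ℝ V) : sorth ω W = ω.orthogonal W := by
  ext v
  constructor
  · intro hv w hw
    exact hωalt.isRefl _ _ (hv w hw)
  · intro hv w hw
    exact hωalt.isRefl _ _ (hv w hw)

lemma sorth_sup (ω : LinearMap.BilinForm ℝ V) (E F : Submodule ℝ V) :
    sorth ω (E ⊔ F) = sorth ω E ⊓ sorth ω F := by
  ext v
  constructor
  · intro hv
    exact ⟨fun w hw => hv w (Submodule.mem_sup_left hw),
      fun w hw => hv w (Submodule.mem_sup_right hw)⟩
  · rintro ⟨h1, h2⟩ w hw
    obtain ⟨e, he, f, hf, rfl⟩ := Submodule.mem_sup.mp hw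
    rw [map_add, h1 e he, h2 f hf, add_zero]

lemma sorth_sorth [FiniteDimensional ℝ V] (ω : LinearMap.BilinForm ℝ V)
    (hω : ω.Nondegenerate) (hωalt : ω.IsAlt) (W : Submodule ℝ V) :
    sorth ω (sorth ω W) = W := by
  rw [sorth_eq_orthogonal ω hωalt, sorth_eq_orthogonal ω hωalt,
    LinearMap.BilinForm.orthogonal_orthogonal hω hωalt.isRefl]

theorem sorth_sum_eq_inf_and_inter [FiniteDimensional ℝ V]
    (ω : LinearMap.BilinForm ℝ V) (hω : ω.Nondegenerate) (hωalt : ω.IsAlt)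
    (A B : Submodule ℝ V) (hA : sorth ω A ≤ A) (hB : sorth ω B ≤ B) :
    sorth ω (sorth ω A ⊔ sorth ω B) = A ⊓ B ∧
      (sorth ω A ⊔ sorth ω B) ⊓ sorth ω (sorth ω A ⊔ sorth ω B)
        = (sorth ω A ⊔ sorth ω B) ⊓ (A ⊓ B) ∧
      (sorth ω A ⊔ sorth ω B) ⊓ (A ⊓ B) = (sorth ω A ⊓ B) ⊔ (sorth ω B ⊓ A) := by
  have h1 : sorth ω (sorth ω A ⊔ sorth ω B) = A ⊓ B := by
    rw [sorth_sup, sorth_sorth ω hω hωalt, sorth_sorth ω hω hωalt]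
  refine ⟨h1, by rw [h1], ?_⟩
  apply le_antisymm
  · rintro x ⟨hxW, hxA, hxB⟩
    obtain ⟨a, ha, b, hb, rfl⟩ := Submodule.mem_sup.mp hxW
    have hbA : b ∈ A := by
      have : b = a + b - a := by abel
      rw [this]; exact Submodule.sub_mem A hxA (hA ha)
    have haB : a ∈ B := by
      have : a = a + b - b := by abel
      rw [this]; exact Submodule.sub_mem B hxB (hB hb)
    exact Submodule.add_mem _ (Submodule.mem_sup_left ⟨ha, haB⟩)
      (Submodule.mem_sup_right ⟨hb, hbA⟩)
  · apply sup_le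
    · rintro x ⟨hxA, hxB⟩
      exact ⟨Submodule.mem_sup_left hxA, hA hxA, hxB⟩
    · rintro x ⟨hxB, hxA⟩
      exact ⟨Submodule.mem_sup_right hxB, hxA, hB hxB⟩
end

section
/- (Uniqueness of elementary invariants) Let (A,B) be a coisotropic pair in (V,ω) and suppose V = V₁ ⊕ ... ⊕ V₅, A = A₁ ⊕ ... ⊕ A₅, B = B₁ ⊕ ... ⊕ B₅ and V = V₁' ⊕ ... ⊕ V₅', A = A₁' ⊕ ... ⊕ A₅', B = B₁' ⊕ ... ⊕ B₅' are two elementary decompositions of (A,B), both with summand types ordered (λ, δ, σ, μ_B, μ_A). Then dim Vᵢ = dim Vᵢ' for each i = 1,...,5. -/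
open Module

variable {V : Type*} [AddCommGroup V] [Module ℝ V]

/-- An elementary decomposition of a coisotropic pair `(A, B)`:
`V = V₁ ⊕ ⋯ ⊕ V₅` is an internal direct sum of pairwise `ω`-orthogonal symplectic
subspaces, `A = ⨁ Aᵢ`, `B = ⨁ Bᵢ` with `Aᵢ, Bᵢ ⊆ Vᵢ`, and the summand pairs are
of elementary types `(λ, δ, σ, μ_B, μ_A)` in this order. -/
def IsElemDecomp (ω : LinearMap.BilinForm ℝ V) (A B : Submodule ℝ V)
    (Vs As Bs : Fin 5 → Submodule ℝ V) : Prop :=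
  DirectSum.IsInternal Vs ∧
  (∀ i j, i ≠ j → OrthSub ω (Vs i) (Vs j)) ∧
  (∀ i, Vs i ⊓ sorth ω (Vs i) = ⊥) ∧
  (∀ i, As i ≤ Vs i) ∧ (∀ i, Bs i ≤ Vs i) ∧
  A = (⨆ i, As i) ∧ B = (⨆ i, Bs i) ∧
  -- type λ : A₁ = B₁ is lagrangian in V₁
  (As 0 = Bs 0 ∧ As 0 = sorth ω (As 0) ⊓ Vs 0) ∧
  -- type δ : A₂, B₂ lagrangian in V₂ with A₂ ⊓ B₂ = ⊥
  (As 1 = sorth ω (As 1) ⊓ Vs 1 ∧ Bs 1 = sorth ω (Bs 1) ⊓ Vs 1 ∧ As 1 ⊓ Bs 1 = ⊥) ∧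
  -- type σ : A₃ = B₃ = V₃
  (As 2 = Vs 2 ∧ Bs 2 = Vs 2) ∧
  -- type μ_B : B₄ = V₄ and A₄ lagrangian in V₄
  (Bs 3 = Vs 3 ∧ As 3 = sorth ω (As 3) ⊓ Vs 3) ∧
  -- type μ_A : A₅ = V₅ and B₅ lagrangian in V₅
  (As 4 = Vs 4 ∧ Bs 4 = sorth ω (Bs 4) ⊓ Vs 4)

lemma mem_sorth (ω : LinearMap.BilinForm ℝ V) {W : Submodule ℝ V} {v : V} :
    v ∈ sorth ω W ↔ ∀ w ∈ W, ω v w = 0 := Iff.rfl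

lemma mem_iSup_fin {n : ℕ} (p : Fin n → Submodule ℝ V) (v : V) :
    v ∈ (⨆ i, p i) ↔ ∃ x : Fin n → V, (∀ i, x i ∈ p i) ∧ ∑ i, x i = v := by
  rw [Submodule.mem_iSup_iff_exists_finsupp]
  constructor
  · rintro ⟨f, hf, rfl⟩
    refine ⟨f, hf, ?_⟩
    rw [Finsupp.sum_fintype _ _ fun _ => rfl]
  · rintro ⟨x, hx, rfl⟩
    refine ⟨Finsupp.equivFunOnFinite.symm x, fun i => hx i, ?_⟩
    rw [Finsupp.sum_fintype _ _ fun _ => rfl]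
    rfl

lemma indep_comp_zero {n : ℕ} (Vs : Fin n → Submodule ℝ V) (h : iSupIndep Vs)
    (x : Fin n → V) (hx : ∀ i, x i ∈ Vs i) (hs : ∑ i, x i = 0) : ∀ i, x i = 0 := by
  intro i
  have h2 := Finset.add_sum_erase Finset.univ x (Finset.mem_univ i)
  have h3 : x i = -∑ j ∈ Finset.univ.erase i, x j :=
    eq_neg_of_add_eq_zero_left (h2.trans hs)
  have h4 : x i ∈ ⨆ (j) (_ : j ≠ i), Vs j := by
    rw [h3]
    exact Submodule.neg_mem _ (Submodule.sum_mem _ fun j hj =>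
      Submodule.mem_iSup_of_mem j (Submodule.mem_iSup_of_mem (Finset.ne_of_mem_erase hj) (hx j)))
  exact Submodule.disjoint_def.mp (iSupIndep_def.mp h i) _ (hx i) h4

lemma inf_iSup_fin {n : ℕ} (Vs X Y : Fin n → Submodule ℝ V) (h : iSupIndep Vs)
    (hX : ∀ i, X i ≤ Vs i) (hY : ∀ i, Y i ≤ Vs i) :
    (⨆ i, X i) ⊓ (⨆ i, Y i) = ⨆ i, (X i ⊓ Y i) := by
  apply le_antisymm
  · rintro v ⟨hv1, hv2⟩
    obtain ⟨x, hx, hxs⟩ := (mem_iSup_fin X v).mp hv1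
    obtain ⟨y, hy, hys⟩ := (mem_iSup_fin Y v).mp hv2
    have hz : ∀ i, x i - y i = 0 := by
      refine indep_comp_zero Vs h _ (fun i => Submodule.sub_mem _ (hX i (hx i)) (hY i (hy i))) ?_
      rw [Finset.sum_sub_distrib, hxs, hys, sub_self]
    rw [← hxs]
    refine Submodule.sum_mem _ fun i _ => Submodule.mem_iSup_of_mem i ⟨hx i, ?_⟩
    rw [show x i = y i from sub_eq_zero.mp (hz i)]
    exact hy i
  · exact iSup_le fun i => le_inf (inf_le_left.trans (le_iSup X i))
      (inf_le_right.trans (le_iSup Y i))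

lemma sorth_iSup_fin {n : ℕ} (ω : LinearMap.BilinForm ℝ V) (Vs X : Fin n → Submodule ℝ V)
    (htop : (⨆ i, Vs i) = ⊤)
    (horth : ∀ i j, i ≠ j → OrthSub ω (Vs i) (Vs j))
    (hX : ∀ i, X i ≤ Vs i) :
    sorth ω (⨆ i, X i) = ⨆ i, (sorth ω (X i) ⊓ Vs i) := by
  apply le_antisymm
  · intro v hv
    rw [mem_sorth] at hv
    obtain ⟨x, hx, hxs⟩ := (mem_iSup_fin Vs v).mp (by rw [htop]; exact Submodule.mem_top)
    rw [← hxs]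
    refine Submodule.sum_mem _ fun i _ => Submodule.mem_iSup_of_mem i
      (Submodule.mem_inf.mpr ⟨?_, hx i⟩)
    rw [mem_sorth]
    intro w hw
    have h1 : ω v w = 0 := hv w (Submodule.mem_iSup_of_mem i hw)
    have h2 : ω v w = ∑ j, ω (x j) w := by rw [← hxs, map_sum, LinearMap.sum_apply]
    have h3 : ∑ j, ω (x j) w = ω (x i) w :=
      Finset.sum_eq_single_of_mem i (Finset.mem_univ i)
        (fun j _ hj => horth j i hj (x j) (hx j) w (hX i hw))
    rw [← h3, ← h2, h1]
  · refine iSup_le fun i v hv => ?_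
    obtain ⟨hv1, hv2⟩ := Submodule.mem_inf.mp hv
    rw [mem_sorth]
    intro w hw
    obtain ⟨y, hy, hys⟩ := (mem_iSup_fin X w).mp hw
    rw [← hys, map_sum]
    refine Finset.sum_eq_zero fun j _ => ?_
    by_cases hji : j = i
    · subst hji
      exact hv1 (y j) (hy j)
    · exact horth i j (fun hij => hji hij.symm) v hv2 (y j) (hX j (hy j))

lemma finrank_iSup_indep [FiniteDimensional ℝ V] (X : Fin 5 → Submodule ℝ V)
    (h : iSupIndep X) :
    finrank ℝ ↥(⨆ i, X i) = finrank ℝ (X 0) + finrank ℝ (X 1) + finrank ℝ (X 2)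
      + finrank ℝ (X 3) + finrank ℝ (X 4) := by
  classical
  have hinj := h.dfinsupp_lsum_injective
  have hrange := Submodule.iSup_eq_range_dfinsupp_lsum X
  let e : (Π₀ i, ↥(X i)) ≃ₗ[ℝ] ↥(⨆ i, X i) :=
    (LinearEquiv.ofInjective _ hinj).trans (LinearEquiv.ofEq _ _ hrange.symm)
  rw [← e.finrank_eq]
  have h2 : finrank ℝ (Π₀ i, ↥(X i)) = ∑ i, finrank ℝ (X i) :=
    ((DirectSum.linearEquivFunOnFintype ℝ (Fin 5) fun i => ↥(X i)).finrank_eq).trans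
      (Module.finrank_pi_fintype ℝ)
  rw [h2, Fin.sum_univ_five]

lemma lagrangian_dim [FiniteDimensional ℝ V] (ω : LinearMap.BilinForm ℝ V) (hωalt : ω.IsAlt)
    (U L : Submodule ℝ V) (hU : U ⊓ sorth ω U = ⊥) (hL : L = sorth ω L ⊓ U) :
    finrank ℝ U = 2 * finrank ℝ L := by
  have hLe : L ≤ U := hL.trans_le inf_le_right
  set B : LinearMap.BilinForm ℝ ↥U := ω.restrict U with hB
  have hBapp : ∀ x y : U, B x y = ω x y := fun x y => rfl
  have hBrefl : B.IsRefl := fun x y hxy => hωalt.isRefl (x : V) (y : V) hxy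
  have hBnd : B.Nondegenerate := by
    refine (LinearMap.IsRefl.nondegenerate_iff_separatingLeft hBrefl).mpr ?_
    intro x hx
    have hmem : (x : V) ∈ U ⊓ sorth ω U :=
      ⟨x.2, (mem_sorth ω).mpr fun w hw => hx ⟨w, hw⟩⟩
    rw [hU] at hmem
    exact Subtype.ext hmem
  set L' : Submodule ℝ ↥U := L.comap U.subtype with hL'
  have horthL : B.orthogonal L' = L' := by
    ext x
    rw [LinearMap.BilinForm.mem_orthogonal_iff]
    constructor
    · intro hx
      have hxs : (x : V) ∈ sorth ω L := by
        rw [mem_sorth]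
        intro w hw
        have := hx ⟨w, hLe hw⟩ (by simpa [hL'] using hw)
        exact hωalt.isRefl _ _ this
      show (x : V) ∈ L
      rw [hL]
      exact ⟨hxs, x.2⟩
    · intro hx n hn
      have hxL : (x : V) ∈ L := hx
      rw [hL] at hxL
      have := (mem_sorth ω).mp hxL.1 (n : V) hn
      exact hωalt.isRefl _ _ this
  have hfr := LinearMap.BilinForm.finrank_orthogonal hBnd L'
  rw [horthL] at hfr
  have hfr2 : finrank ℝ L' = finrank ℝ L :=
    (Submodule.comapSubtypeEquivOfLe hLe).finrank_eq
  have hle : finrank ℝ L' ≤ finrank ℝ ↥U := Submodule.finrank_le L'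
  omega


lemma decomp_invariants [FiniteDimensional ℝ V] (ω : LinearMap.BilinForm ℝ V)
    (hωalt : ω.IsAlt) (A B : Submodule ℝ V) (Vs As Bs : Fin 5 → Submodule ℝ V)
    (hdec : IsElemDecomp ω A B Vs As Bs) :
    finrank ℝ (Vs 0) = 2 * finrank ℝ ↥(sorth ω A ⊓ sorth ω B) ∧
    finrank ℝ (Vs 1) + 2 * finrank ℝ ↥(sorth ω A ⊓ B) = 2 * finrank ℝ ↥(sorth ω A) ∧
    finrank ℝ (Vs 2) + finrank ℝ ↥(sorth ω A ⊓ B) + finrank ℝ ↥(sorth ω B ⊓ A)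
      = finrank ℝ ↥(A ⊓ B) + finrank ℝ ↥(sorth ω A ⊓ sorth ω B) ∧
    finrank ℝ (Vs 3) + 2 * finrank ℝ ↥(sorth ω A ⊓ sorth ω B)
      = 2 * finrank ℝ ↥(sorth ω A ⊓ B) ∧
    finrank ℝ (Vs 4) + 2 * finrank ℝ ↥(sorth ω A ⊓ sorth ω B)
      = 2 * finrank ℝ ↥(sorth ω B ⊓ A) := by
  obtain ⟨hint, horth, hsymp, hAle, hBle, hAeq, hBeq, ⟨hl1, hl2⟩, ⟨hd1, hd2, hd3⟩,
    ⟨hs1, hs2⟩, ⟨hm1, hm2⟩, ⟨hn1, hn2⟩⟩ := hdec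
  have hindep : iSupIndep Vs := hint.submodule_iSupIndep
  have htop : (⨆ i, Vs i) = ⊤ := hint.submodule_iSup_eq_top
  -- components of sorth A and sorth B
  have hsA : sorth ω A = ⨆ i, (sorth ω (As i) ⊓ Vs i) := by
    rw [hAeq]; exact sorth_iSup_fin ω Vs As htop horth hAle
  have hsB : sorth ω B = ⨆ i, (sorth ω (Bs i) ⊓ Vs i) := by
    rw [hBeq]; exact sorth_iSup_fin ω Vs Bs htop horth hBle
  have hA0 : sorth ω (As 0) ⊓ Vs 0 = As 0 := hl2.symm
  have hA1 : sorth ω (As 1) ⊓ Vs 1 = As 1 := hd1.symm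
  have hA2 : sorth ω (As 2) ⊓ Vs 2 = ⊥ := by rw [hs1, inf_comm]; exact hsymp 2
  have hA3 : sorth ω (As 3) ⊓ Vs 3 = As 3 := hm2.symm
  have hA4 : sorth ω (As 4) ⊓ Vs 4 = ⊥ := by rw [hn1, inf_comm]; exact hsymp 4
  have hB0 : sorth ω (Bs 0) ⊓ Vs 0 = As 0 := by rw [← hl1]; exact hl2.symm
  have hB1 : sorth ω (Bs 1) ⊓ Vs 1 = Bs 1 := hd2.symm
  have hB2 : sorth ω (Bs 2) ⊓ Vs 2 = ⊥ := by rw [hs2, inf_comm]; exact hsymp 2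
  have hB3 : sorth ω (Bs 3) ⊓ Vs 3 = ⊥ := by rw [hm1, inf_comm]; exact hsymp 3
  have hB4 : sorth ω (Bs 4) ⊓ Vs 4 = Bs 4 := hn2.symm
  have hle1 : ∀ i, sorth ω (As i) ⊓ Vs i ≤ Vs i := fun i => inf_le_right
  have hle2 : ∀ i, sorth ω (Bs i) ⊓ Vs i ≤ Vs i := fun i => inf_le_right
  -- useful inf facts
  have h34 : As 3 ⊓ Vs 3 = As 3 := inf_eq_left.mpr (hAle 3)
  have h44 : Bs 4 ⊓ Vs 4 = Bs 4 := inf_eq_left.mpr (hBle 4)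
  have h44' : Vs 4 ⊓ Bs 4 = Bs 4 := inf_eq_right.mpr (hBle 4)
  have hd3' : Bs 1 ⊓ As 1 = ⊥ := by rw [inf_comm]; exact hd3
  -- n1 : finrank (sorth A)
  have e1 : finrank ℝ ↥(sorth ω A)
      = finrank ℝ (As 0) + finrank ℝ (As 1) + finrank ℝ (As 3) := by
    rw [hsA, finrank_iSup_indep _ (hindep.mono hle1), hA0, hA1, hA2, hA3, hA4,
      finrank_bot ℝ V]
    omega
  -- n0 : finrank (sorth A ⊓ sorth B)
  have e0 : finrank ℝ ↥(sorth ω A ⊓ sorth ω B) = finrank ℝ (As 0) := by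
    have t0 : (sorth ω (As 0) ⊓ Vs 0) ⊓ (sorth ω (Bs 0) ⊓ Vs 0) = As 0 := by
      rw [hA0, hB0, inf_idem]
    have t1 : (sorth ω (As 1) ⊓ Vs 1) ⊓ (sorth ω (Bs 1) ⊓ Vs 1) = ⊥ := by
      rw [hA1, hB1, hd3]
    have t2 : (sorth ω (As 2) ⊓ Vs 2) ⊓ (sorth ω (Bs 2) ⊓ Vs 2) = ⊥ := by
      rw [hA2, bot_inf_eq]
    have t3 : (sorth ω (As 3) ⊓ Vs 3) ⊓ (sorth ω (Bs 3) ⊓ Vs 3) = ⊥ := by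
      rw [hB3, inf_bot_eq]
    have t4 : (sorth ω (As 4) ⊓ Vs 4) ⊓ (sorth ω (Bs 4) ⊓ Vs 4) = ⊥ := by
      rw [hA4, bot_inf_eq]
    rw [hsA, hsB, inf_iSup_fin Vs _ _ hindep hle1 hle2,
      finrank_iSup_indep _ (hindep.mono fun i => le_trans inf_le_left inf_le_right),
      t0, t1, t2, t3, t4, finrank_bot ℝ V]
    omega
  -- n3 : finrank (sorth A ⊓ B)
  have e3 : finrank ℝ ↥(sorth ω A ⊓ B) = finrank ℝ (As 0) + finrank ℝ (As 3) := by
    have t0 : (sorth ω (As 0) ⊓ Vs 0) ⊓ Bs 0 = As 0 := by rw [hA0, ← hl1, inf_idem]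
    have t1 : (sorth ω (As 1) ⊓ Vs 1) ⊓ Bs 1 = ⊥ := by rw [hA1, hd3]
    have t2 : (sorth ω (As 2) ⊓ Vs 2) ⊓ Bs 2 = ⊥ := by rw [hA2, bot_inf_eq]
    have t3 : (sorth ω (As 3) ⊓ Vs 3) ⊓ Bs 3 = As 3 := by rw [hA3, hm1, h34]
    have t4 : (sorth ω (As 4) ⊓ Vs 4) ⊓ Bs 4 = ⊥ := by rw [hA4, bot_inf_eq]
    rw [hsA, hBeq, inf_iSup_fin Vs _ _ hindep hle1 hBle,
      finrank_iSup_indep _ (hindep.mono fun i => le_trans inf_le_left inf_le_right),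
      t0, t1, t2, t3, t4, finrank_bot ℝ V]
    omega
  -- n4 : finrank (sorth B ⊓ A)
  have e4 : finrank ℝ ↥(sorth ω B ⊓ A) = finrank ℝ (As 0) + finrank ℝ (Bs 4) := by
    have t0 : (sorth ω (Bs 0) ⊓ Vs 0) ⊓ As 0 = As 0 := by rw [hB0, inf_idem]
    have t1 : (sorth ω (Bs 1) ⊓ Vs 1) ⊓ As 1 = ⊥ := by rw [hB1, hd3']
    have t2 : (sorth ω (Bs 2) ⊓ Vs 2) ⊓ As 2 = ⊥ := by rw [hB2, bot_inf_eq]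
    have t3 : (sorth ω (Bs 3) ⊓ Vs 3) ⊓ As 3 = ⊥ := by rw [hB3, bot_inf_eq]
    have t4 : (sorth ω (Bs 4) ⊓ Vs 4) ⊓ As 4 = Bs 4 := by rw [hB4, hn1, h44]
    rw [hsB, hAeq, inf_iSup_fin Vs _ _ hindep hle2 hAle,
      finrank_iSup_indep _ (hindep.mono fun i => le_trans inf_le_left inf_le_right),
      t0, t1, t2, t3, t4, finrank_bot ℝ V]
    omega
  -- n2 : finrank (A ⊓ B)
  have e2 : finrank ℝ ↥(A ⊓ B) = finrank ℝ (As 0) + finrank ℝ (Vs 2)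
      + finrank ℝ (As 3) + finrank ℝ (Bs 4) := by
    have t0 : As 0 ⊓ Bs 0 = As 0 := by rw [← hl1, inf_idem]
    have t2 : As 2 ⊓ Bs 2 = Vs 2 := by rw [hs1, hs2, inf_idem]
    have t3 : As 3 ⊓ Bs 3 = As 3 := by rw [hm1, h34]
    have t4 : As 4 ⊓ Bs 4 = Bs 4 := by rw [hn1, h44']
    rw [hAeq, hBeq, inf_iSup_fin Vs _ _ hindep hAle hBle,
      finrank_iSup_indep _ (hindep.mono fun i => le_trans inf_le_left (hAle i)),
      t0, hd3, t2, t3, t4, finrank_bot ℝ V]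
    omega
  -- lagrangian dimensions
  have hv0 : finrank ℝ (Vs 0) = 2 * finrank ℝ (As 0) :=
    lagrangian_dim ω hωalt (Vs 0) (As 0) (hsymp 0) hl2
  have hv1 : finrank ℝ (Vs 1) = 2 * finrank ℝ (As 1) :=
    lagrangian_dim ω hωalt (Vs 1) (As 1) (hsymp 1) hd1
  have hv3 : finrank ℝ (Vs 3) = 2 * finrank ℝ (As 3) :=
    lagrangian_dim ω hωalt (Vs 3) (As 3) (hsymp 3) hm2
  have hv4 : finrank ℝ (Vs 4) = 2 * finrank ℝ (Bs 4) :=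
    lagrangian_dim ω hωalt (Vs 4) (Bs 4) (hsymp 4) hn2
  refine ⟨?_, ?_, ?_, ?_, ?_⟩ <;> omega

theorem elementary_invariants_unique [FiniteDimensional ℝ V]
    (ω : LinearMap.BilinForm ℝ V) (hω : ω.Nondegenerate) (hωalt : ω.IsAlt)
    (A B : Submodule ℝ V) (hA : sorth ω A ≤ A) (hB : sorth ω B ≤ B)
    (Vs As Bs Vs' As' Bs' : Fin 5 → Submodule ℝ V)
    (hdec : IsElemDecomp ω A B Vs As Bs)
    (hdec' : IsElemDecomp ω A B Vs' As' Bs') :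
    ∀ i, finrank ℝ (Vs i) = finrank ℝ (Vs' i) := by
  obtain ⟨q0, q1, q2, q3, q4⟩ := decomp_invariants ω hωalt A B Vs As Bs hdec
  obtain ⟨r0, r1, r2, r3, r4⟩ := decomp_invariants ω hωalt A B Vs' As' Bs' hdec'
  intro i
  fin_cases i
  · show finrank ℝ (Vs 0) = finrank ℝ (Vs' 0); omega
  · show finrank ℝ (Vs 1) = finrank ℝ (Vs' 1); omega
  · show finrank ℝ (Vs 2) = finrank ℝ (Vs' 2); omega
  · show finrank ℝ (Vs 3) = finrank ℝ (Vs' 3); omega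
  · show finrank ℝ (Vs 4) = finrank ℝ (Vs' 4); omega
end
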